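/- Algorithm KPT satisfies Confirmation Validity: if a miner labels block b as accepted (all cousin blocks of b are labeled rejected, where a block is labeled rejected when every branch it belongs to has been observed shorter than some cousin block's depth for 2·PT consecutive rounds), then b is accepted, i.e., b lies on the unique infinite branch. -/
import Mathlib


/-- `b` is an ancestor of `c` or equal to it. -/
def AncOrEq {B : Type} (parent : B → Option B) (b c : B) : Prop :=
  Relation.ReflTransGen (fun x y => parent x = some y) c b

/-- An infinite branch: a path from the root following the child relation. -/
def InfBranch {B : Type} (parent : B → Option B) (root : B) (f : ℕ → B) : Prop :=
  f 0 = root ∧ ∀ n, parent (f (n + 1)) = some (f n)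

/-- A (maximal) branch of the tree: a set of blocks containing the root, closed under
parent, pairwise comparable, and maximal with these properties. -/
def IsMaxBranch {B : Type} (parent : B → Option B) (root : B) (C : Set B) : Prop :=
  root ∈ C ∧
  (∀ c ∈ C, ∀ p : B, parent c = some p → p ∈ C) ∧
  (∀ c ∈ C, ∀ c' ∈ C, AncOrEq parent c c' ∨ AncOrEq parent c' c) ∧
  (∀ d : B, (∀ c ∈ C, AncOrEq parent c d ∨ AncOrEq parent d c) → d ∈ C)

/-- Algorithm KPT satisfies Confirmation Validity. Miner `m` labels a block
`c` rejected only when, for every (maximal) branch `C` that `c` belongs to, `m` has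
observed a cousin block `b2` whose depth exceeds the length of `C` (every block of `C`
known to `m` is strictly shallower than `b2`) for `2·PT` consecutive rounds; by the
available lemma (Lemma 5 of the paper) such a branch is dead, hence finite. If `m`
labels `b` accepted — i.e. every cousin block of `b` is labeled rejected — then `b` is
accepted: it lies on the unique infinite branch `g`. -/
theorem stmt_18 {B M : Type} (root : B) (parent : B → Option B) (depth : B → ℕ)
    (knows : ℕ → M → B → Prop) (PT : ℕ)
    (hroot : parent root = none)
    (hreach : ∀ b : B, AncOrEq parent root b)
    (hdepth : ∀ c p : B, parent c = some p → depth c = depth p + 1)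
    (g : ℕ → B) (hg : InfBranch parent root g)
    (huniq : ∀ f : ℕ → B, InfBranch parent root f → f = g)
    (m : M) (b : B)
    (Rej : B → Prop)
    (hrule : ∀ c, Rej c → ∀ C : Set B, IsMaxBranch parent root C → c ∈ C →
      ∃ (b2 : B) (r : ℕ), b2 ∉ C ∧ knows r m b2 ∧
        ∀ ρ, r ≤ ρ → ρ ≤ r + 2 * PT → ∀ d ∈ C, knows ρ m d → depth d < depth b2)
    (hdeadLemma : ∀ C : Set B, IsMaxBranch parent root C →
      (∃ (b2 : B) (r : ℕ), b2 ∉ C ∧ knows r m b2 ∧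
        ∀ ρ, r ≤ ρ → ρ ≤ r + 2 * PT → ∀ d ∈ C, knows ρ m d → depth d < depth b2) →
      C.Finite)
    (haccLabel : ∀ c : B, ¬ AncOrEq parent c b → ¬ AncOrEq parent b c → Rej c) :
    b ∈ Set.range g := by
  classical
  by_contra hb
  -- depth along g
  have hdg : ∀ n, depth (g n) = depth root + n := by
    intro n
    induction n with
    | zero => simp [hg.1]
    | succ n ih => rw [hdepth (g (n+1)) (g n) (hg.2 n), ih]; ring
  -- ancestors of g n are values of g
  have hanc : ∀ n c, Relation.ReflTransGen (fun x y => parent x = some y) (g n) c →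
      ∃ k, k ≤ n ∧ c = g k := by
    intro n
    induction n with
    | zero =>
      intro c h
      rcases Relation.ReflTransGen.cases_head h with rfl | ⟨y, hy, _⟩
      · exact ⟨0, le_refl _, rfl⟩
      · rw [hg.1, hroot] at hy; exact absurd hy (by simp)
    | succ n ih =>
      intro c h
      rcases Relation.ReflTransGen.cases_head h with rfl | ⟨y, hy, h2⟩
      · exact ⟨n+1, le_refl _, rfl⟩
      · rw [hg.2 n] at hy
        obtain rfl : g n = y := Option.some.inj hy
        obtain ⟨k, hk, rfl⟩ := ih c h2
        exact ⟨k, Nat.le_succ_of_le hk, rfl⟩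
  -- depth is monotone along ancestry
  have hmono : ∀ a c : B, Relation.ReflTransGen (fun x y => parent x = some y) c a →
      depth a ≤ depth c := by
    intro a c h
    induction h with
    | refl => exact le_refl _
    | tail _ h2 ih =>
      rename_i mid fin _
      have := hdepth mid fin h2
      omega
  -- comparability along g
  have hcomp : ∀ k d, Relation.ReflTransGen (fun x y => parent x = some y) (g (k + d)) (g k) := by
    intro k d
    induction d with
    | zero => exact Relation.ReflTransGen.refl
    | succ d ih => exact Relation.ReflTransGen.head (hg.2 (k + d)) ih
  -- range g is a maximal branch
  have hmax : IsMaxBranch parent root (Set.range g) := by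
    refine ⟨⟨0, hg.1⟩, ?_, ?_, ?_⟩
    · rintro c ⟨n, rfl⟩ p hp
      cases n with
      | zero => rw [hg.1, hroot] at hp; exact absurd hp (by simp)
      | succ n =>
        rw [hg.2 n] at hp
        exact ⟨n, Option.some.inj hp⟩
    · rintro c ⟨n, rfl⟩ c' ⟨n', rfl⟩
      rcases le_total n n' with h | h
      · left
        obtain ⟨d, rfl⟩ := Nat.exists_eq_add_of_le h
        exact hcomp n d
      · right
        obtain ⟨d, rfl⟩ := Nat.exists_eq_add_of_le h
        exact hcomp n' d
    · intro d hd
      rcases hd (g (depth d + 1)) ⟨depth d + 1, rfl⟩ with h | h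
      · have := hmono (g (depth d + 1)) d h
        rw [hdg] at this
        omega
      · obtain ⟨k, _, rfl⟩ := hanc _ d h
        exact ⟨k, rfl⟩
  -- b is incomparable with g (depth b + 1)
  set n := depth b + 1 with hn
  have h1 : ¬ AncOrEq parent b (g n) := by
    intro h
    obtain ⟨k, _, rfl⟩ := hanc n b h
    exact hb ⟨k, rfl⟩
  have h2 : ¬ AncOrEq parent (g n) b := by
    intro h
    have := hmono (g n) b h
    rw [hdg] at this
    omega
  have hrej : Rej (g n) := haccLabel (g n) h2 h1
  have hfin := hdeadLemma (Set.range g) hmax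
    (hrule (g n) hrej (Set.range g) hmax ⟨n, rfl⟩)
  have hginj : Function.Injective g := by
    intro i j hij
    have : depth (g i) = depth (g j) := by rw [hij]
    rw [hdg, hdg] at this
    omega
  exact (Set.infinite_range_of_injective hginj) hfin
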